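/- Let V be a complex Hilbert space and M a set of continuous ℂ-linear operators on V closed under adjoints. Suppose that every continuous normal operator on V (a continuous operator commuting with its adjoint) that commutes with every element of M is a complex scalar multiple of the identity. Then (M,V) is topologically irreducible: every closed subspace of V invariant under every element of M equals {0} or V. -/

import Mathlib

/-- A Schur normal system on a complex Hilbert space is topologically
irreducible: if `M` is closed under adjoints and every continuous normal operator
commuting with every element of `M` is a complex scalar multiple of the identity,
then every closed invariant subspace is `⊥` or `⊤`. -/
theorem schur_normal_system_irreducible
    {V : Type*} [NormedAddCommGroup V] [InnerProductSpace ℂ V] [CompleteSpace V]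
    (M : Set (V →L[ℂ] V)) (hM : ∀ m ∈ M, ContinuousLinearMap.adjoint m ∈ M)
    (hSchur : ∀ N : V →L[ℂ] V,
      N ∘L ContinuousLinearMap.adjoint N = ContinuousLinearMap.adjoint N ∘L N →
      (∀ m ∈ M, N ∘L m = m ∘L N) →
      ∃ c : ℂ, N = c • ContinuousLinearMap.id ℂ V)
    (W : Submodule ℂ V) (hWclosed : IsClosed (W : Set V))
    (hWinv : ∀ m ∈ M, ∀ w ∈ W, m w ∈ W) :
    W = ⊥ ∨ W = ⊤ := by
  haveI : CompleteSpace W := hWclosed.completeSpace_coe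
  set P : V →L[ℂ] V := W.subtypeL ∘L W.orthogonalProjectionOnto with hP
  have hsa : IsSelfAdjoint P := isSelfAdjoint_starProjection W
  have hPmem : ∀ v : V, P v ∈ W := fun v => (W.orthogonalProjectionOnto v).2
  have hPself : ∀ v ∈ W, P v = v := fun v hv => by
    simpa [hP] using W.starProjection_eq_self_iff.mpr hv
  have hPorth : ∀ v ∈ Wᗮ, P v = 0 := fun v hv => by
    simp [hP, Submodule.orthogonalProjectionOnto_apply_of_mem_orthogonal hv]
  have hcomm : ∀ m ∈ M, P ∘L m = m ∘L P := by
    intro m hm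
    ext v
    have hdec : v = P v + (v - P v) := by abel
    have hvW : P v ∈ W := hPmem v
    have hvo : v - P v ∈ Wᗮ := Submodule.sub_starProjection_mem_orthogonal v
    have hmo : m (v - P v) ∈ Wᗮ := by
      rw [Submodule.mem_orthogonal]
      intro x hx
      have := hWinv _ (hM m hm) x hx
      calc inner ℂ x (m (v - P v))
          = inner ℂ (ContinuousLinearMap.adjoint m x) (v - P v) :=
            (ContinuousLinearMap.adjoint_inner_left m (v - P v) x).symm
        _ = (0 : ℂ) := hvo _ this
    have : P (m v) = m (P v) := by
      conv_lhs => rw [hdec]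
      rw [map_add, map_add, hPself _ (hWinv m hm _ hvW), hPorth _ hmo, add_zero]
    simpa using this
  obtain ⟨c, hc⟩ := hSchur P (by rw [hsa.adjoint_eq]) hcomm
  rcases eq_or_ne c 0 with h0 | h1
  · left
    rw [Submodule.eq_bot_iff]
    intro x hx
    have := hPself x hx
    rw [hc, h0] at this
    simpa using this.symm
  · right
    rw [Submodule.eq_top_iff']
    intro x
    have h := hPmem x
    rw [hc] at h
    simp only [ContinuousLinearMap.smul_apply, ContinuousLinearMap.id_apply] at h
    have := W.smul_mem c⁻¹ h
    rwa [smul_smul, inv_mul_cancel₀ h1, one_smul] at this
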